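/- Let Φ : Ω → W be a C¹ diffeomorphism between open sets in ℝⁿ, ν, C₁,…,C_{n-2} : Ω → ℝ be C¹ functions, and define the brackets {f,g}_{ν;C₁,…,C_{n-2}} := ν · det Jac(C₁,…,C_{n-2},f,g) on Ω, and similarly on W with ν_Φ := (ν∘Φ⁻¹)·(det Jac(Φ) ∘ Φ⁻¹) and Casimirs Cᵢ∘Φ⁻¹. Then for all C¹ functions f,g : Ω → ℝ, ({f,g}_{ν;C₁,…,C_{n-2}}) ∘ Φ⁻¹ = {f∘Φ⁻¹, g∘Φ⁻¹}_{ν_Φ; C₁∘Φ⁻¹,…,C_{n-2}∘Φ⁻¹}, i.e., Φ is a Poisson map. -/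

import Mathlib

/-- The Jacobian determinant of a map `F : ℝⁿ → ℝⁿ` at a point `x`. -/
noncomputable def jacDet {n : ℕ} (F : (Fin n → ℝ) → (Fin n → ℝ)) (x : Fin n → ℝ) : ℝ :=
  LinearMap.det ((fderiv ℝ F x : (Fin n → ℝ) →L[ℝ] (Fin n → ℝ)) :
    (Fin n → ℝ) →ₗ[ℝ] (Fin n → ℝ))

/-- The bracket `{f,g}_{ν;C₁,…,C_{n-2}}(x) = ν(x) · det Jac(C₁,…,C_{n-2},f,g)(x)`. -/
noncomputable def nuBracket {n : ℕ} (ν : (Fin n → ℝ) → ℝ)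
    (C : Fin (n - 2) → (Fin n → ℝ) → ℝ) (f g : (Fin n → ℝ) → ℝ)
    (x : Fin n → ℝ) : ℝ :=
  ν x * jacDet (fun z j =>
    if hj : (j : ℕ) < n - 2 then C ⟨j, hj⟩ z
    else if (j : ℕ) = n - 2 then f z else g z) x

/-- A C¹ diffeomorphism `Φ : Ω → W` (with inverse `Ψ`) is a Poisson map:
`{f,g}_{ν;C} ∘ Φ⁻¹ = {f∘Φ⁻¹, g∘Φ⁻¹}_{ν_Φ; C∘Φ⁻¹}` on `W`, where
`ν_Φ = (ν∘Φ⁻¹)·(Jac Φ ∘ Φ⁻¹)`. -/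
theorem stmt3 {n : ℕ} (Ω W : Set (Fin n → ℝ)) (hΩ : IsOpen Ω) (hW : IsOpen W)
    (Φ Ψ : (Fin n → ℝ) → (Fin n → ℝ))
    (hmaps : Set.MapsTo Φ Ω W) (hmaps' : Set.MapsTo Ψ W Ω)
    (hleft : ∀ x ∈ Ω, Ψ (Φ x) = x) (hright : ∀ y ∈ W, Φ (Ψ y) = y)
    (hΦ : ContDiffOn ℝ 1 Φ Ω) (hΨ : ContDiffOn ℝ 1 Ψ W)
    (ν : (Fin n → ℝ) → ℝ) (hν : ContDiffOn ℝ 1 ν Ω)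
    (C : Fin (n - 2) → (Fin n → ℝ) → ℝ) (hC : ∀ i, ContDiffOn ℝ 1 (C i) Ω)
    (f g : (Fin n → ℝ) → ℝ)
    (hf : ContDiffOn ℝ 1 f Ω) (hg : ContDiffOn ℝ 1 g Ω) :
    ∀ y ∈ W,
      nuBracket ν C f g (Ψ y)
        = nuBracket (fun z => ν (Ψ z) * jacDet Φ (Ψ z))
            (fun i z => C i (Ψ z)) (fun z => f (Ψ z)) (fun z => g (Ψ z)) y := by
  intro y hy
  have hxΩ : Ψ y ∈ Ω := hmaps' hy
  have hΨd : DifferentiableAt ℝ Ψ y :=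
    ((hΨ.differentiableOn one_ne_zero) y hy).differentiableAt (hW.mem_nhds hy)
  have hΦd : DifferentiableAt ℝ Φ (Ψ y) :=
    ((hΦ.differentiableOn one_ne_zero) (Ψ y) hxΩ).differentiableAt (hΩ.mem_nhds hxΩ)
  set G : (Fin n → ℝ) → (Fin n → ℝ) := fun z j =>
    if hj : (j : ℕ) < n - 2 then C ⟨j, hj⟩ z
    else if (j : ℕ) = n - 2 then f z else g z with hG
  have hGd : DifferentiableAt ℝ G (Ψ y) := by
    rw [differentiableAt_pi]
    intro j
    by_cases hj : (j : ℕ) < n - 2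
    · have : (fun z => G z j) = C ⟨j, hj⟩ := by funext z; simp [hG, hj]
      rw [this]
      exact (((hC ⟨j, hj⟩).differentiableOn one_ne_zero) _ hxΩ).differentiableAt
        (hΩ.mem_nhds hxΩ)
    · by_cases hj2 : (j : ℕ) = n - 2
      · have : (fun z => G z j) = f := by funext z; simp [hG, hj, hj2]
        rw [this]
        exact ((hf.differentiableOn one_ne_zero) _ hxΩ).differentiableAt (hΩ.mem_nhds hxΩ)
      · have : (fun z => G z j) = g := by funext z; simp [hG, hj, hj2]
        rw [this]
        exact ((hg.differentiableOn one_ne_zero) _ hxΩ).differentiableAt (hΩ.mem_nhds hxΩ)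
  -- chain rule for G ∘ Ψ
  have hcompG : fderiv ℝ (fun z => G (Ψ z)) y = (fderiv ℝ G (Ψ y)).comp (fderiv ℝ Ψ y) :=
    fderiv_comp y hGd hΨd
  -- Φ ∘ Ψ = id near y
  have hΦΨ : fderiv ℝ (fun z => Φ (Ψ z)) y = (fderiv ℝ Φ (Ψ y)).comp (fderiv ℝ Ψ y) :=
    fderiv_comp y hΦd hΨd
  have heq : (fun z => Φ (Ψ z)) =ᶠ[nhds y] id := by
    filter_upwards [hW.mem_nhds hy] with z hz
    exact hright z hz
  have hid : fderiv ℝ (fun z => Φ (Ψ z)) y = ContinuousLinearMap.id ℝ (Fin n → ℝ) := by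
    rw [heq.fderiv_eq]
    exact fderiv_id
  have hdet1 : jacDet Φ (Ψ y) * jacDet Ψ y = 1 := by
    have := hΦΨ.symm.trans hid
    have hdet := congrArg (fun L : (Fin n → ℝ) →L[ℝ] (Fin n → ℝ) =>
      LinearMap.det (L : (Fin n → ℝ) →ₗ[ℝ] (Fin n → ℝ))) this
    simpa [jacDet, ContinuousLinearMap.coe_comp, LinearMap.det_comp] using hdet
  have hdet2 : jacDet (fun z => G (Ψ z)) y = jacDet G (Ψ y) * jacDet Ψ y := by
    have hdet := congrArg (fun L : (Fin n → ℝ) →L[ℝ] (Fin n → ℝ) =>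
      LinearMap.det (L : (Fin n → ℝ) →ₗ[ℝ] (Fin n → ℝ))) hcompG
    simpa [jacDet, ContinuousLinearMap.coe_comp, LinearMap.det_comp] using hdet
  show ν (Ψ y) * jacDet G (Ψ y)
      = (ν (Ψ y) * jacDet Φ (Ψ y)) * jacDet (fun z => G (Ψ z)) y
  rw [hdet2]
  calc ν (Ψ y) * jacDet G (Ψ y)
      = ν (Ψ y) * jacDet G (Ψ y) * (jacDet Φ (Ψ y) * jacDet Ψ y) := by rw [hdet1]; ring
    _ = (ν (Ψ y) * jacDet Φ (Ψ y)) * (jacDet G (Ψ y) * jacDet Ψ y) := by ring
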